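/- arXiv:0912.1559 — 2 statements merged into one kernel-verified Lean document; each statement's English description precedes it below -/
import Mathlib

section
/- Let G be a finite abelian group with socle G_0, and let ξ be a nonzero element of I_K(G) = Σ_p I_p ⊗ K G_{p'} (where I_p is the ideal of KG_p generated by ξ(G_{0,p})). Then there exists a nonempty set Q of primes dividing |G| and a coset A of G_{0,Q} in G such that for every p ∈ Q, the p-projection of the support of ξ ∘ ξ(A) equals the p-projection A_p of A. -/
/-- Bézout decomposition in a commutative group: if `h ^ (p * m) = 1` with `p, m`
coprime, then `h` factors as a product of a `p`-torsion and an `m`-torsion element. -/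
lemma coset_decomp_aux {G : Type*} [CommGroup G] (h : G) (p m : ℕ) (hc : Nat.Coprime p m)
    (h1 : h ^ (p * m) = 1) : ∃ t s : G, t ^ p = 1 ∧ s ^ m = 1 ∧ h = t * s := by
  have hbez : (p : ℤ) * Nat.gcdA p m + (m : ℤ) * Nat.gcdB p m = 1 := by
    have h2 := Nat.gcd_eq_gcd_ab p m
    rw [hc] at h2
    push_cast at h2
    linarith
  have hzero : h ^ ((p * m : ℕ) : ℤ) = 1 := by
    rw [zpow_natCast, h1]
  refine ⟨h ^ ((m : ℤ) * Nat.gcdB p m), h ^ ((p : ℤ) * Nat.gcdA p m), ?_, ?_, ?_⟩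
  · have : (h ^ ((m : ℤ) * Nat.gcdB p m)) ^ (p : ℕ)
        = (h ^ ((p * m : ℕ) : ℤ)) ^ Nat.gcdB p m := by
      rw [← zpow_natCast (h ^ ((m : ℤ) * Nat.gcdB p m)), ← zpow_mul, ← zpow_mul]
      congr 1
      push_cast
      ring
    rw [this, hzero, one_zpow]
  · have : (h ^ ((p : ℤ) * Nat.gcdA p m)) ^ (m : ℕ)
        = (h ^ ((p * m : ℕ) : ℤ)) ^ Nat.gcdA p m := by
      rw [← zpow_natCast (h ^ ((p : ℤ) * Nat.gcdA p m)), ← zpow_mul, ← zpow_mul]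
      congr 1
      push_cast
      ring
    rw [this, hzero, one_zpow]
  · rw [← zpow_add]
    have he : (m : ℤ) * Nat.gcdB p m + (p : ℤ) * Nat.gcdA p m = 1 := by linarith
    rw [he, zpow_one]

/-- Evaluation of the indicator of the coset `g • G[q]` at `x`. -/
lemma indicator_eval_aux {G : Type*} [CommGroup G] [Fintype G] [DecidableEq G]
    {K : Type*} [Field K] (g x : G) (q : ℕ) :
    ((∑ h ∈ Finset.univ.filter (fun h : G => h ^ q = 1),
        MonoidAlgebra.single (g * h) (1 : K)) : MonoidAlgebra K G).coeff x
      = if (g⁻¹ * x) ^ q = 1 then (1 : K) else 0 := by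
  classical
  rw [MonoidAlgebra.coeff_sum, Finsupp.finset_sum_apply]
  have step : ∀ h : G, (MonoidAlgebra.single (g * h) (1 : K)).coeff x
      = if h = g⁻¹ * x then (1 : K) else 0 := by
    intro h
    rw [MonoidAlgebra.coeff_single, Finsupp.single_apply]
    congr 1
    exact propext ⟨fun e => by rw [← e]; group, fun e => by rw [e]; group⟩
  rw [Finset.sum_congr rfl fun h _ => step h, Finset.sum_ite_eq']
  simp

/-- Key induction: if `ξ` restricted to the coset `a • G_{0,Q}` decomposes as a sum of
`G_{0,q}`-invariant functions (`q ∈ Q`), and `ξ a ≠ 0`, then some nonempty `Q' ⊆ Q`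
works in the sense of the main theorem, with the same base point `a`. -/
lemma key_induction_aux {G : Type*} [CommGroup G] [Fintype G] [DecidableEq G]
    {K : Type*} [Field K] (ξ : MonoidAlgebra K G) (a : G) (ha : ξ.coeff a ≠ 0) :
    ∀ Q : Finset ℕ, (∀ p ∈ Q, p.Prime) →
    (∃ η : ℕ → G → K,
      (∀ q ∈ Q, ∀ x h : G, h ^ q = 1 → η q (x * h) = η q x) ∧
      (∀ x : G, (x * a⁻¹) ^ (∏ q ∈ Q, q) = 1 → ξ.coeff x = ∑ q ∈ Q, η q x)) →
    ∃ Q' : Finset ℕ, Q' ⊆ Q ∧ Q'.Nonempty ∧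
      ∀ p ∈ Q', ∀ g ∈ {x : G | ∃ h : G, h ^ (∏ q ∈ Q', q) = 1 ∧ x = a * h},
        ∃ x ∈ {x : G | ∃ h : G, h ^ (∏ q ∈ Q', q) = 1 ∧ x = a * h},
          ξ.coeff x ≠ 0 ∧ Nat.Coprime (orderOf (x * g⁻¹)) p := by
  intro Q
  induction Q using Finset.strongInduction with
  | _ Q ih =>
  intro hprime ⟨η, hinv, hrep⟩
  -- Q is nonempty, else ξ a = 0
  have hQne : Q.Nonempty := by
    rcases Q.eq_empty_or_nonempty with rfl | hne
    · exfalso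
      apply ha
      have := hrep a (by simp)
      simpa using this
    · exact hne
  set n := ∏ q ∈ Q, q with hn
  by_cases hC : ∀ p ∈ Q, ∀ g : G, (g * a⁻¹) ^ n = 1 →
      ∃ x : G, (x * a⁻¹) ^ n = 1 ∧ ξ.coeff x ≠ 0 ∧ Nat.Coprime (orderOf (x * g⁻¹)) p
  · -- done: Q itself works
    refine ⟨Q, le_refl Q, hQne, ?_⟩
    intro p hp g hg
    obtain ⟨h, hh1, rfl⟩ := hg
    have hga : (a * h) * a⁻¹ = h := by simp [mul_assoc, mul_comm, mul_left_comm]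
    obtain ⟨x, hx1, hx2, hx3⟩ := hC p hp (a * h) (by rw [hga]; exact hh1)
    refine ⟨x, ⟨x * a⁻¹, hx1, by simp [mul_assoc, mul_comm, mul_left_comm]⟩, hx2, hx3⟩
  · push_neg at hC
    obtain ⟨p, hpQ, g, hg1, hneg⟩ := hC
    set m := ∏ q ∈ Q.erase p, q with hm
    have hnpm : n = p * m := (Finset.mul_prod_erase Q id hpQ).symm
    have hcop : Nat.Coprime p m := by
      apply Nat.Coprime.prod_right
      intro q hq
      exact (Nat.coprime_primes (hprime p hpQ) (hprime q (Finset.mem_of_mem_erase hq))).mpr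
        (Finset.ne_of_mem_erase hq).symm
    -- claim: ξ vanishes on the coset g • G_{0, Q \ {p}}
    have claim1 : ∀ y : G, (y * g⁻¹) ^ m = 1 → ξ.coeff y = 0 := by
      intro y hy
      by_contra hyne
      have hyA : (y * a⁻¹) ^ n = 1 := by
        have hya : y * a⁻¹ = (y * g⁻¹) * (g * a⁻¹) := by
          simp [mul_assoc, mul_comm, mul_left_comm]
        rw [hya, mul_pow, hg1, mul_one, hnpm, mul_comm p m, pow_mul, hy, one_pow]
      have hord : (orderOf (y * g⁻¹)).Coprime p :=
        (hcop.coprime_dvd_right (orderOf_dvd_of_pow_eq_one hy)).symm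
      exact hneg y hyA hyne hord
    -- decompose a * g⁻¹ = t * s with t p-torsion and s m-torsion
    have hag : (a * g⁻¹) ^ (p * m) = 1 := by
      rw [← hnpm]
      have hai : a * g⁻¹ = (g * a⁻¹)⁻¹ := by simp [mul_assoc, mul_comm, mul_left_comm]
      rw [hai, inv_pow, hg1, inv_one]
    obtain ⟨t, s, ht, hs, hts⟩ := coset_decomp_aux (a * g⁻¹) p m hcop hag
    have htinv : (t⁻¹) ^ p = 1 := by rw [inv_pow, ht, inv_one]
    -- new decomposition of ξ on the coset a • G_{0, Q \ {p}}
    have hgood : ∃ η' : ℕ → G → K,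
        (∀ q ∈ Q.erase p, ∀ x h : G, h ^ q = 1 → η' q (x * h) = η' q x) ∧
        (∀ x : G, (x * a⁻¹) ^ (∏ q ∈ Q.erase p, q) = 1 →
          ξ.coeff x = ∑ q ∈ Q.erase p, η' q x) := by
      refine ⟨fun q x => η q x - η q (x * t⁻¹), ?_, ?_⟩
      · intro q hq x h hh
        dsimp only
        have hq' : q ∈ Q := Finset.mem_of_mem_erase hq
        have h1 : x * h * t⁻¹ = (x * t⁻¹) * h := by simp [mul_assoc, mul_comm, mul_left_comm]
        rw [hinv q hq' x h hh, h1, hinv q hq' (x * t⁻¹) h hh]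
      · intro x hx
        dsimp only
        rw [← hm] at hx
        have hxA : (x * a⁻¹) ^ n = 1 := by
          rw [hnpm, mul_comm p m, pow_mul, hx, one_pow]
        have hxtA : ((x * t⁻¹) * a⁻¹) ^ n = 1 := by
          have h2 : (x * t⁻¹) * a⁻¹ = (x * a⁻¹) * t⁻¹ := by
            simp [mul_assoc, mul_comm, mul_left_comm]
          rw [h2, mul_pow, hxA, one_mul, hnpm, pow_mul, htinv, one_pow]
        have hxt0 : ξ.coeff (x * t⁻¹) = 0 := by
          apply claim1
          have h3 : (x * t⁻¹) * g⁻¹ = (x * a⁻¹) * s := by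
            have h4 : a * g⁻¹ * t⁻¹ = s := by rw [hts, mul_comm t s, mul_inv_cancel_right]
            calc (x * t⁻¹) * g⁻¹ = (x * a⁻¹) * (a * g⁻¹ * t⁻¹) := by
                  rw [mul_right_comm x t⁻¹ g⁻¹, ← mul_assoc, ← mul_assoc, inv_mul_cancel_right]
            _ = (x * a⁻¹) * s := by rw [h4]
          rw [h3, mul_pow, hx, hs, one_mul]
        have e1 : ξ.coeff x = ∑ q ∈ Q, η q x := hrep x hxA
        have e2 : (0 : K) = ∑ q ∈ Q, η q (x * t⁻¹) := hxt0 ▸ hrep (x * t⁻¹) hxtA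
        have e3 : ξ.coeff x = ∑ q ∈ Q, (η q x - η q (x * t⁻¹)) := by
          rw [Finset.sum_sub_distrib, ← e1, ← e2, sub_zero]
        have e4 : η p x - η p (x * t⁻¹) = 0 := by
          rw [hinv p hpQ x t⁻¹ htinv, sub_self]
        calc ξ.coeff x = ∑ q ∈ Q, (η q x - η q (x * t⁻¹)) := e3
        _ = (η p x - η p (x * t⁻¹)) + ∑ q ∈ Q.erase p, (η q x - η q (x * t⁻¹)) :=
            (Finset.add_sum_erase Q _ hpQ).symm
        _ = ∑ q ∈ Q.erase p, (η q x - η q (x * t⁻¹)) := by rw [e4, zero_add]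
    obtain ⟨Q', hsub, hne, hconcl⟩ :=
      ih (Q.erase p) (Finset.erase_ssubset hpQ)
        (fun q hq => hprime q (Finset.mem_of_mem_erase hq)) hgood
    exact ⟨Q', hsub.trans (Finset.erase_subset p Q), hne, hconcl⟩

/-- If `ξ` is a nonzero element of the ideal `I_K(G)` (spanned by the sums over
cosets of the elementary abelian subgroups `G_{0,p}`), then there is a nonempty set
`Q` of primes dividing `|G|` and a coset `A` of `G_{0,Q}` such that for each `p ∈ Q`
the `p`-projection of the support of the restriction of `ξ` to `A` is all of `A_p`:
every `g ∈ A` agrees in its `p`-part with some element of the support inside `A`. -/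
theorem exists_coset_support_full_p_projection
    {G : Type*} [CommGroup G] [Fintype G] [DecidableEq G]
    {K : Type*} [Field K]
    (ξ : MonoidAlgebra K G) (hξ0 : ξ ≠ 0)
    (hξ : ξ ∈ Submodule.span K
      {η : MonoidAlgebra K G | ∃ (g : G) (p : ℕ), p.Prime ∧ p ∣ Fintype.card G ∧
        η = ∑ h ∈ Finset.univ.filter (fun h : G => h ^ p = 1),
              MonoidAlgebra.single (g * h) (1 : K)}) :
    ∃ Q : Finset ℕ, Q.Nonempty ∧ (∀ p ∈ Q, p.Prime ∧ p ∣ Fintype.card G) ∧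
      ∃ a : G, ∀ p ∈ Q, ∀ g ∈ {x : G | ∃ h : G, h ^ (∏ q ∈ Q, q) = 1 ∧ x = a * h},
        ∃ x ∈ {x : G | ∃ h : G, h ^ (∏ q ∈ Q, q) = 1 ∧ x = a * h},
          ξ.coeff x ≠ 0 ∧ Nat.Coprime (orderOf (x * g⁻¹)) p := by
  classical
  -- get a point in the support
  obtain ⟨a, ha⟩ : ∃ a : G, ξ.coeff a ≠ 0 := by
    by_contra hcon
    push_neg at hcon
    exact hξ0 (MonoidAlgebra.ext (Finsupp.ext fun x => hcon x))
  -- get a finite representation from span membership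
  rw [Submodule.mem_span_set'] at hξ
  obtain ⟨n, c, v, hsum⟩ := hξ
  choose gi pi hpr hdvd hval using fun i => (v i).2
  set P : Finset ℕ := Finset.image pi Finset.univ with hP
  set η : ℕ → G → K := fun q x =>
    ∑ i ∈ Finset.univ.filter (fun i => pi i = q), c i * ((v i : MonoidAlgebra K G).coeff x)
    with hη
  have hrepall : ∀ x : G, ξ.coeff x = ∑ q ∈ P, η q x := by
    intro x
    rw [hη]
    rw [Finset.sum_fiberwise_of_maps_to (fun i _ => Finset.mem_image_of_mem pi
      (Finset.mem_univ i)) (fun i => c i * ((v i : MonoidAlgebra K G).coeff x))]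
    rw [← hsum, MonoidAlgebra.coeff_sum, Finsupp.finset_sum_apply]
    exact Finset.sum_congr rfl fun i _ => by rw [MonoidAlgebra.coeff_smul, Finsupp.smul_apply, smul_eq_mul]
  have hinvall : ∀ q ∈ P, ∀ x h : G, h ^ q = 1 → η q (x * h) = η q x := by
    intro q _ x h hh
    rw [hη]
    refine Finset.sum_congr rfl fun i hi => ?_
    have hpiq : pi i = q := (Finset.mem_filter.mp hi).2
    congr 1
    rw [hval i, indicator_eval_aux, indicator_eval_aux]
    congr 1
    rw [hpiq, ← mul_assoc, mul_pow, hh, mul_one]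
  have hPprime : ∀ p ∈ P, p.Prime := by
    intro p hp
    obtain ⟨i, _, rfl⟩ := Finset.mem_image.mp hp
    exact hpr i
  obtain ⟨Q', hsub, hne, hconcl⟩ :=
    key_induction_aux ξ a ha P hPprime ⟨η, hinvall, fun x _ => hrepall x⟩
  refine ⟨Q', hne, ?_, a, hconcl⟩
  intro p hp
  obtain ⟨i, _, rfl⟩ := Finset.mem_image.mp (hsub hp)
  exact ⟨hpr i, hdvd i⟩
end

section
/- Let R be a CG-ring, L ≤ R^× a subgroup, and T a pure L-orbit on R. Let S and S' be distinct subsets of T with S nonempty. Then there exists a unit character χ ∈ R̂^× (i.e., a character of R^+ of the form x ↦ χ_0(rx) with r ∈ R^× and χ_0 a fixed generating character) such that Σ_{s∈S} χ(s) ≠ Σ_{s∈S'} χ(s). -/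
open Pointwise

/-- A Galois ring: a finite commutative local ring whose radical is `pR` for a prime `p`. -/
def IsGaloisRing (R : Type*) [CommRing R] : Prop :=
  ∃ p : ℕ, p.Prime ∧ IsLocalRing R ∧ nilradical R = Ideal.span {(p : R)}

/-- A CG-ring: a finite commutative ring isomorphic to a product of Galois rings of
pairwise coprime characteristics. -/
def IsCGRing (R : Type*) [CommRing R] : Prop :=
  ∃ (n : ℕ) (S : Fin n → Type) (instR : ∀ i, CommRing (S i)) (_ : ∀ i, Fintype (S i)),
    letI : ∀ i, CommRing (S i) := instR
    (∀ i, IsGaloisRing (S i)) ∧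
    (∀ i j, i ≠ j → Nat.Coprime (ringChar (S i)) (ringChar (S j))) ∧
    Nonempty (R ≃+* ∀ i, S i)

/-- A nonempty subset `X` of a ring is pure if `X + I = X` forces `I = 0`. -/
def IsPureSet {R : Type*} [CommRing R] (X : Set R) : Prop :=
  ∀ I : Ideal R, X + (I : Set R) = X → I = ⊥


open Finset in
lemma aux_char_sum {R : Type*} [CommRing R] [Fintype R] [DecidableEq R] (χ₀ : AddChar R ℂ)
    (hinj : Function.Injective fun r : R => χ₀.mulShift r) (y : R) :
    ∑ w : R, χ₀ (w * y) = if y = 0 then (Fintype.card R : ℂ) else 0 := by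
  split_ifs with hy
  · subst hy; simp
  · have h1 : χ₀.mulShift y ≠ 1 := by
      intro hh
      exact hy (hinj (show χ₀.mulShift y = χ₀.mulShift 0 by rw [hh, AddChar.mulShift_zero]))
    have := AddChar.sum_eq_zero_of_ne_one h1
    simpa [AddChar.mulShift_apply, mul_comm] using this

open Finset in
lemma aux_corner {R : Type*} [CommRing R] [Fintype R] [DecidableEq R] (χ₀ : AddChar R ℂ)
    (hinj : Function.Injective fun r : R => χ₀.mulShift r) {n : ℕ}
    (f : R → ℂ) (hu : ∀ u : R, IsUnit u → ∑ y : R, f y * χ₀ (u * y) = 0)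
    (a : Fin n → R) (ha : ∀ w : R, ¬ IsUnit w → ∃ i, w * a i = 0) (s : R) :
    ∑ B ∈ (Finset.univ : Finset (Fin n)).powerset,
      (-1:ℂ)^(n - B.card) * f (s - ∑ i ∈ B, a i) = 0 := by
  have hQ0 : ∑ w : R, (∏ i, (χ₀ (w * a i) - 1)) * (∑ y : R, f y * χ₀ (w * (y - s))) = 0 := by
    apply Finset.sum_eq_zero
    intro w _
    by_cases hw : IsUnit w
    · have h2 : (∑ y : R, f y * χ₀ (w * (y - s))) =
          (∑ y : R, f y * χ₀ (w * y)) * χ₀ (w * (-s)) := by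
        rw [Finset.sum_mul]
        apply Finset.sum_congr rfl
        intro y _
        rw [mul_assoc, ← AddChar.map_add_eq_mul]
        congr 2
        ring
      rw [h2, hu w hw, zero_mul, mul_zero]
    · obtain ⟨i, hi⟩ := ha w hw
      rw [Finset.prod_eq_zero (Finset.mem_univ i), zero_mul]
      rw [hi, AddChar.map_zero_eq_one, sub_self]
  have hexp : ∀ w : R, (∏ i, (χ₀ (w * a i) - 1)) =
      ∑ B ∈ (Finset.univ : Finset (Fin n)).powerset,
        (-1:ℂ)^(n - B.card) * χ₀ (w * ∑ i ∈ B, a i) := by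
    intro w
    have hprod : ∀ B : Finset (Fin n), ∏ i ∈ B, χ₀ (w * a i) = χ₀ (w * ∑ i ∈ B, a i) := by
      intro B
      rw [Finset.mul_sum]
      induction B using Finset.induction_on with
      | empty => simp
      | insert _ _ hx ih =>
          rw [Finset.prod_insert hx, Finset.sum_insert hx, AddChar.map_add_eq_mul, ih]
    have h := Finset.prod_add (fun i => χ₀ (w * a i)) (fun _ => (-1:ℂ)) Finset.univ
    have h' : ∏ i, (χ₀ (w * a i) - 1) = ∏ i, (χ₀ (w * a i) + (-1)) := by
      apply Finset.prod_congr rfl; intros; ring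
    rw [h', h]
    apply Finset.sum_congr rfl
    intro B hB
    rw [hprod B, Finset.prod_const, Finset.card_univ_diff, Fintype.card_fin]
    ring
  have key : ∀ B ∈ (Finset.univ : Finset (Fin n)).powerset,
      ∑ w : R, χ₀ (w * ∑ i ∈ B, a i) * (∑ y : R, f y * χ₀ (w * (y - s))) =
      (Fintype.card R : ℂ) * f (s - ∑ i ∈ B, a i) := by
    intro B _
    set z := ∑ i ∈ B, a i with hz
    have h1 : ∀ w : R, χ₀ (w * z) * (∑ y : R, f y * χ₀ (w * (y - s))) =
        ∑ y : R, f y * χ₀ (w * (z + (y - s))) := by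
      intro w
      rw [Finset.mul_sum]
      apply Finset.sum_congr rfl
      intro y _
      rw [mul_left_comm, ← AddChar.map_add_eq_mul]
      congr 2
      ring
    simp only [h1]
    rw [Finset.sum_comm]
    have h2 : ∀ y : R, ∑ w : R, f y * χ₀ (w * (z + (y - s))) =
        f y * (if z + (y - s) = 0 then (Fintype.card R : ℂ) else 0) := by
      intro y
      rw [← Finset.mul_sum]
      congr 1
      exact aux_char_sum χ₀ hinj (z + (y - s))
    simp only [h2]
    rw [Finset.sum_eq_single (s - z)]
    · simp [mul_comm]
    · intro y _ hy
      rw [if_neg, mul_zero]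
      intro hc
      exact hy (by linear_combination hc)
    · intro hmem; exact absurd (Finset.mem_univ _) hmem
  have hcomb : (0:ℂ) = (Fintype.card R : ℂ) *
      ∑ B ∈ (Finset.univ : Finset (Fin n)).powerset,
        (-1:ℂ)^(n - B.card) * f (s - ∑ i ∈ B, a i) := by
    rw [← hQ0]
    simp only [hexp]
    calc ∑ w : R, (∑ B ∈ (Finset.univ : Finset (Fin n)).powerset,
            (-1:ℂ)^(n - B.card) * χ₀ (w * ∑ i ∈ B, a i)) * (∑ y : R, f y * χ₀ (w * (y - s)))
        = ∑ w : R, ∑ B ∈ (Finset.univ : Finset (Fin n)).powerset,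
            (-1:ℂ)^(n - B.card) *
              (χ₀ (w * ∑ i ∈ B, a i) * (∑ y : R, f y * χ₀ (w * (y - s)))) := by
          apply Finset.sum_congr rfl
          intro w _
          rw [Finset.sum_mul]
          apply Finset.sum_congr rfl
          intros; ring
      _ = ∑ B ∈ (Finset.univ : Finset (Fin n)).powerset, ∑ w : R,
            (-1:ℂ)^(n - B.card) *
              (χ₀ (w * ∑ i ∈ B, a i) * (∑ y : R, f y * χ₀ (w * (y - s)))) :=
          Finset.sum_comm
      _ = ∑ B ∈ (Finset.univ : Finset (Fin n)).powerset,
            (-1:ℂ)^(n - B.card) * ((Fintype.card R : ℂ) * f (s - ∑ i ∈ B, a i)) := by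
          apply Finset.sum_congr rfl
          intro B hB
          rw [← Finset.mul_sum, key B hB]
      _ = (Fintype.card R : ℂ) * ∑ B ∈ (Finset.univ : Finset (Fin n)).powerset,
            (-1:ℂ)^(n - B.card) * f (s - ∑ i ∈ B, a i) := by
          rw [Finset.mul_sum]
          apply Finset.sum_congr rfl
          intros; ring
  have hcard : (Fintype.card R : ℂ) ≠ 0 := by
    simp [Fintype.card_ne_zero]
  exact ((mul_eq_zero.mp hcomb.symm).resolve_left hcard)



lemma aux_nonunit_nilpotent {A : Type} [CommRing A] [Fintype A] [IsLocalRing A]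
    {w : A} (hw : ¬ IsUnit w) : IsNilpotent w := by
  obtain ⟨i, j, hij, hpow⟩ := Finite.exists_ne_map_eq_of_infinite (fun k : ℕ => w ^ k)
  wlog h : i < j generalizing i j
  · exact this j i hij.symm hpow.symm (by omega)
  have hd0 : j - i ≠ 0 := by omega
  have hunit : IsUnit (1 - w ^ (j - i)) := by
    rcases IsLocalRing.isUnit_or_isUnit_one_sub_self (w ^ (j - i)) with hu | hu
    · exact absurd ((isUnit_pow_iff hd0).mp hu) hw
    · exact hu
  have hz : w ^ i * (1 - w ^ (j - i)) = 0 := by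
    rw [mul_sub, mul_one, ← pow_add, show i + (j - i) = j from Nat.add_sub_cancel' h.le,
      ← hpow]
    ring
  have hzero : w ^ i = 0 := (IsUnit.mul_left_eq_zero hunit).mp hz
  exact ⟨i, hzero⟩

lemma aux_galois {A : Type} [CommRing A] [Fintype A] (hA : IsGaloisRing A) :
    ∃ (p : ℕ) (s : A), p.Prime ∧ p ∣ ringChar A ∧ s ≠ 0 ∧ (p : A) * s = 0 ∧
      ∀ w : A, ¬ IsUnit w → w * s = 0 := by
  obtain ⟨p, hp, hloc, hnil⟩ := hA
  haveI := hloc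
  have hpn : IsNilpotent (p : A) := by
    rw [← mem_nilradical, hnil]
    exact Ideal.subset_span rfl
  have hex : ∃ m, (p : A) ^ m = 0 := hpn
  classical
  have he : (p : A) ^ Nat.find hex = 0 := Nat.find_spec hex
  set e := Nat.find hex with hedef
  have he0 : e ≠ 0 := by
    intro h0
    rw [h0, pow_zero] at he
    exact one_ne_zero he
  have hlt : e - 1 < e := Nat.sub_lt (Nat.pos_of_ne_zero he0) one_pos
  have hs0 : (p : A) ^ (e - 1) ≠ 0 := Nat.find_min hex hlt
  have hpe : (p : A) * (p : A) ^ (e - 1) = 0 := by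
    rw [show (p:A) * (p:A)^(e-1) = (p:A)^(e-1+1) by ring,
      show e - 1 + 1 = e by omega, he]
  refine ⟨p, (p : A) ^ (e - 1), hp, ?_, hs0, hpe, ?_⟩
  · have hcast : ((p ^ e : ℕ) : A) = 0 := by push_cast; exact he
    have hdvd : ringChar A ∣ p ^ e := ringChar.dvd hcast
    obtain ⟨k, hk, hck⟩ := (Nat.dvd_prime_pow hp).mp hdvd
    have hk0 : k ≠ 0 := by
      intro h0
      rw [h0, pow_zero] at hck
      exact CharP.ringChar_ne_one hck
    rw [hck]
    exact dvd_pow_self p hk0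
  · intro w hw
    have hnilw : IsNilpotent w := aux_nonunit_nilpotent hw
    have : w ∈ nilradical A := mem_nilradical.mpr hnilw
    rw [hnil, Ideal.mem_span_singleton'] at this
    obtain ⟨c, hc⟩ := this
    rw [← hc, mul_assoc, hpe, mul_zero]




open Finset in
lemma aux_choice {R : Type*} [CommRing R] [Fintype R] {n : ℕ}
    (ε σ : Fin n → R) (p : Fin n → ℕ)
    (h3i : ∀ i, σ i * ε i = σ i)
    (h3j : ∀ i j, i ≠ j → σ i * ε j = 0)
    (hσ0 : ∀ i, σ i ≠ 0)
    (hinv : ∀ (i : Fin n) (r : R), r * σ i ≠ 0 → ∃ r', r' * r * σ i = σ i)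
    (hp : ∀ i, (p i : R) * σ i = 0)
    (hpp : ∀ i, (p i).Prime)
    (hpd : ∀ i j, i ≠ j → p i ≠ p j)
    (L : Subgroup Rˣ) (T : Set R) (t : R)
    (hT : T = {y : R | ∃ l ∈ L, ((l : Rˣ) : R) * t = y})
    (hTpure : IsPureSet T)
    (x : R) (hx : x ∈ T) :
    ∃ a : Fin n → R, (∀ i, ∃ b, a i = b * σ i) ∧
      ∀ B : Finset (Fin n), B.Nonempty → x + ∑ i ∈ B, a i ∉ T := by
  classical
  -- orbit helpers
  have hxrep : ∃ l ∈ L, ((l : Rˣ) : R) * t = x := by rw [hT] at hx; exact hx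
  obtain ⟨l₀, hl₀, hl₀x⟩ := hxrep
  have horb : ∀ z ∈ T, ∃ l : Rˣ, l ∈ L ∧ (l : R) * x = z := by
    intro z hz
    rw [hT] at hz
    obtain ⟨l₁, hl₁, hl₁t⟩ := hz
    refine ⟨l₁ * l₀⁻¹, mul_mem hl₁ (inv_mem hl₀), ?_⟩
    rw [← hl₀x, ← hl₁t]
    calc ((l₁ * l₀⁻¹ : Rˣ) : R) * (((l₀ : Rˣ) : R) * t)
        = ((l₁ : Rˣ) : R) * ((((l₀⁻¹ : Rˣ) : R) * ((l₀ : Rˣ) : R)) * t) := by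
          rw [Units.val_mul]; ring
      _ = ((l₁ : Rˣ) : R) * t := by rw [Units.inv_mul, one_mul]
  have hmemT : ∀ (l : Rˣ), l ∈ L → ∀ z ∈ T, (l : R) * z ∈ T := by
    intro l hl z hz
    rw [hT] at hz ⊢
    obtain ⟨l₁, hl₁, rfl⟩ := hz
    exact ⟨l * l₁, mul_mem hl hl₁, by rw [Units.val_mul]; ring⟩
  -- components of orbit differences
  have hco : ∀ (m m' : Rˣ) (j : Fin n),
      ((((m * m' : Rˣ)) : R) * x - x) * ε j
        = (m : R) * ((((m' : Rˣ) : R) * x - x) * ε j) + (((m : Rˣ) : R) * x - x) * ε j := by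
    intro m m' j
    rw [Units.val_mul]
    ring
  set Kmem : Rˣ → Prop :=
    fun l => l ∈ L ∧ ∀ j, ∃ b : R, ((l : R) * x - x) * ε j = b * σ j with hKdef
  -- per-coordinate choice
  have key : ∀ i : Fin n, ∃ ai : R, (∃ b, ai = b * σ i) ∧
      ((∀ l : Rˣ, Kmem l → ((l : R) * x - x) * ε i ≠ ai) ∨
       ((x + ai ∉ T) ∧ ∀ l : Rˣ, Kmem l → ((l : R) - 1) * σ i = 0)) := by
    intro i
    by_cases hI : ∃ l : Rˣ, Kmem l ∧ ((l : R) - 1) * σ i ≠ 0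
    · -- type I
      obtain ⟨k₀, hk₀, hk₀ne⟩ := hI
      obtain ⟨r', hr'⟩ := hinv i ((k₀ : R) - 1) hk₀ne
      obtain ⟨b₀, hb₀⟩ := hk₀.2 i
      set c : R := r' * b₀ * σ i with hcdef
      have hIc : ∀ l : Rˣ, Kmem l →
          ((l : R) * x - x) * ε i = ((l : R) - 1) * c := by
        intro l hl
        obtain ⟨bl, hbl⟩ := hl.2 i
        have heq : (l : R) * (((k₀ : R) * x - x) * ε i) + ((l : R) * x - x) * ε i
            = (k₀ : R) * (((l : R) * x - x) * ε i) + ((k₀ : R) * x - x) * ε i := by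
          rw [← hco, ← hco, mul_comm l k₀]
        have h2 : ((k₀ : R) - 1) * (((l : R) * x - x) * ε i)
            = ((l : R) - 1) * (((k₀ : R) * x - x) * ε i) := by
          linear_combination heq
        have h3 : r' * (((k₀ : R) - 1) * (((l : R) * x - x) * ε i))
            = ((l : R) * x - x) * ε i := by
          rw [hbl]
          calc r' * (((k₀ : R) - 1) * (bl * σ i)) = bl * (r' * ((k₀ : R) - 1) * σ i) := by ring
            _ = bl * σ i := by rw [hr']
        have h4 : r' * (((l : R) - 1) * (((k₀ : R) * x - x) * ε i)) = ((l : R) - 1) * c := by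
          rw [hb₀, hcdef]
          ring
        rw [← h3, h2, h4]
      by_cases hc0 : c = 0
      · refine ⟨σ i, ⟨1, (one_mul _).symm⟩, Or.inl ?_⟩
        intro l hl hlv
        rw [hIc l hl, hc0, mul_zero] at hlv
        exact hσ0 i hlv.symm
      · refine ⟨-c, ⟨-(r' * b₀), by rw [hcdef]; ring⟩, Or.inl ?_⟩
        intro l hl hlv
        rw [hIc l hl] at hlv
        have hlc : (l : R) * c = 0 := by linear_combination hlv
        have hc' : c = 0 := by
          have h5 := congrArg (fun z => ((l⁻¹ : Rˣ) : R) * z) hlc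
          simpa [← mul_assoc, Units.inv_mul] using h5
        exact hc0 hc'
    · -- type II
      push_neg at hI
      have hpur : ∃ ai : R, (∃ b, ai = b * σ i) ∧ x + ai ∉ T := by
        by_contra hcon
        push_neg at hcon
        have hTI : T + ((Ideal.span {σ i} : Ideal R) : Set R) = T := by
          apply Set.Subset.antisymm
          · rintro y hy
            rw [Set.mem_add] at hy
            obtain ⟨z, hz, v, hv, rfl⟩ := hy
            obtain ⟨l, hlL, rfl⟩ := horb z hz
            rw [SetLike.mem_coe, Ideal.mem_span_singleton'] at hv
            obtain ⟨b, rfl⟩ := hv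
            have hone : (l : R) * ((l⁻¹ : Rˣ) : R) = 1 := by
              rw [← Units.val_mul, mul_inv_cancel, Units.val_one]
            have hfac : (l : R) * x + b * σ i
                = (l : R) * (x + (((l⁻¹ : Rˣ) : R) * b) * σ i) := by
              linear_combination -((b * σ i) * hone)
            rw [hfac]
            exact hmemT l hlL _ (hcon _ ⟨((l⁻¹ : Rˣ) : R) * b, rfl⟩)
          · intro y hy
            rw [Set.mem_add]
            exact ⟨y, hy, 0, by simp, by ring⟩
        have hbot := hTpure _ hTI
        have hsz : σ i = 0 := by
          have hmem0 : σ i ∈ (Ideal.span {σ i} : Ideal R) := Ideal.mem_span_singleton_self _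
          rw [hbot] at hmem0
          simpa using hmem0
        exact hσ0 i hsz
      obtain ⟨ai, hai, hnot⟩ := hpur
      exact ⟨ai, hai, Or.inr ⟨hnot, hI⟩⟩
  choose a ha hblock using key
  refine ⟨a, ha, ?_⟩
  intro B hB hmemTT
  obtain ⟨l, hlL, hlx⟩ := horb _ hmemTT
  have hv : (l : R) * x - x = ∑ i ∈ B, a i := by rw [hlx]; ring
  have hcomp : ∀ j, ((l : R) * x - x) * ε j = if j ∈ B then a j else 0 := by
    intro j
    rw [hv, Finset.sum_mul]
    have hterm : ∀ i ∈ B, a i * ε j = if i = j then a j else 0 := by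
      intro i _
      obtain ⟨b, hb⟩ := ha i
      by_cases hij : i = j
      · subst hij
        rw [if_pos rfl, hb, mul_assoc, h3i, ← hb]
      · rw [if_neg hij, hb, mul_assoc, h3j i j hij, mul_zero]
    rw [Finset.sum_congr rfl hterm, Finset.sum_ite_eq' B j (fun _ => a j)]
  have hKl : Kmem l := by
    refine ⟨hlL, fun j => ?_⟩
    rw [hcomp j]
    by_cases hj : j ∈ B
    · rw [if_pos hj]; exact ha j
    · rw [if_neg hj]; exact ⟨0, (zero_mul _).symm⟩
  by_cases hex1 : ∃ i ∈ B, ∀ l' : Rˣ, Kmem l' → ((l' : R) * x - x) * ε i ≠ a i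
  · obtain ⟨i, hiB, hne⟩ := hex1
    exact hne l hKl (by rw [hcomp i, if_pos hiB])
  · push_neg at hex1
    have hBII : ∀ i ∈ B, (x + a i ∉ T) ∧ ∀ l' : Rˣ, Kmem l' → ((l' : R) - 1) * σ i = 0 := by
      intro i hiB
      rcases hblock i with hfirst | hsecond
      · obtain ⟨l', hl', hval⟩ := hex1 i hiB
        exact absurd hval (hfirst l' hl')
      · exact hsecond
    obtain ⟨i₀, hi₀⟩ := hB
    have hfix : (l : R) * ((l : R) * x - x) = (l : R) * x - x := by
      rw [hv, Finset.mul_sum]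
      apply Finset.sum_congr rfl
      intro i hiB
      obtain ⟨b, hb⟩ := ha i
      have h0 : ((l : R) - 1) * σ i = 0 := (hBII i hiB).2 l hKl
      calc (l : R) * a i = a i + b * (((l : R) - 1) * σ i) := by rw [hb]; ring
        _ = a i := by rw [h0, mul_zero, add_zero]
    have hpow : ∀ m : ℕ, ((l ^ m : Rˣ) : R) * x - x = m • ((l : R) * x - x) := by
      intro m
      induction m with
      | zero => simp
      | succ k ih =>
        have hval : ((l ^ (k + 1) : Rˣ) : R) = ((l ^ k : Rˣ) : R) * (l : R) := by
          rw [pow_succ, Units.val_mul]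
        have hsm : (l : R) * (k • ((l : R) * x - x)) = k • ((l : R) * x - x) := by
          rw [mul_smul_comm, hfix]
        calc ((l ^ (k + 1) : Rˣ) : R) * x - x
            = (l : R) * (((l ^ k : Rˣ) : R) * x - x) + ((l : R) * x - x) := by
              rw [hval]; ring
          _ = (l : R) * (k • ((l : R) * x - x)) + ((l : R) * x - x) := by rw [ih]
          _ = k • ((l : R) * x - x) + ((l : R) * x - x) := by rw [hsm]
          _ = (k + 1) • ((l : R) * x - x) := by rw [succ_nsmul]
    set N : ℕ := ∏ j ∈ B.erase i₀, p j with hNdef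
    have hcop : Nat.Coprime N (p i₀) := by
      apply Nat.Coprime.prod_left
      intro j hj
      exact (Nat.coprime_primes (hpp j) (hpp i₀)).mpr (hpd j i₀ (Finset.mem_erase.mp hj).1)
    obtain ⟨M, -, hM⟩ := Nat.exists_mul_mod_eq_one_of_coprime hcop (hpp i₀).one_lt
    have hpa : ∀ i, (p i) • a i = (0 : R) := by
      intro i
      obtain ⟨b, hb⟩ := ha i
      rw [nsmul_eq_mul, hb]
      calc (p i : R) * (b * σ i) = b * ((p i : R) * σ i) := by ring
        _ = 0 := by rw [hp i, mul_zero]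
    have hsum : (N * M) • ((l : R) * x - x) = a i₀ := by
      rw [hv, Finset.smul_sum]
      have hterm : ∀ i ∈ B, (N * M) • a i = if i = i₀ then a i₀ else 0 := by
        intro i hiB
        by_cases hii : i = i₀
        · subst hii
          rw [if_pos rfl]
          have hdecomp : N * M = p i * (N * M / p i) + 1 := by
            conv_lhs => rw [← Nat.div_add_mod (N * M) (p i)]
            rw [hM]
          rw [hdecomp, add_nsmul, one_nsmul, mul_nsmul, hpa i, smul_zero, zero_add]
        · rw [if_neg hii]
          have hdvd : p i ∣ N := Finset.dvd_prod_of_mem _ (Finset.mem_erase.mpr ⟨hii, hiB⟩)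
          obtain ⟨q, hq⟩ := hdvd
          rw [hq, show p i * q * M = p i * (q * M) by ring, mul_nsmul, hpa i, smul_zero]
      rw [Finset.sum_congr rfl hterm, Finset.sum_ite_eq' B i₀ (fun _ => a i₀), if_pos hi₀]
    have hfinal : ((l ^ (N * M) : Rˣ) : R) * x = x + a i₀ := by
      have h6 := hpow (N * M)
      rw [hsum] at h6
      linear_combination h6
    have hxmem : x + a i₀ ∈ T := by
      rw [← hfinal]
      exact hmemT _ (pow_mem hlL _) x hx
    exact (hBII i₀ hi₀).1 hxmem


section PiHelpers

variable {n : ℕ} {Fac : Fin n → Type} [instCR : ∀ i, CommRing (Fac i)]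

lemma aux_mul_single (f : ∀ i, Fac i) (i : Fin n) (x : Fac i) :
    f * Pi.single i x = Pi.single i (f i * x) := by
  classical
  funext j
  by_cases h : j = i
  · subst h
    simp
  · simp [Pi.single_eq_of_ne h]

lemma aux_single_mul_single {i j : Fin n} (h : i ≠ j) (x : Fac i) (y : Fac j) :
    (Pi.single i x : ∀ k, Fac k) * Pi.single j y = 0 := by
  classical
  funext k
  by_cases hk : k = j
  · subst hk
    simp [Pi.single_eq_of_ne (Ne.symm h)]
  · simp [Pi.single_eq_of_ne hk]

lemma aux_pi_isUnit {g : ∀ i, Fac i} (h : ∀ i, IsUnit (g i)) : IsUnit g := by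
  refine ⟨⟨g, fun i => ↑(h i).unit⁻¹, ?_, ?_⟩, rfl⟩
  · funext i
    exact (h i).mul_val_inv
  · funext i
    exact (h i).val_inv_mul

end PiHelpers

open Finset in
/-- Separation theorem, part 1: if `S ≠ S'` are subsets of a pure orbit `T` of a
subgroup `L ≤ R^×` on a CG-ring `R`, `S` nonempty, then some unit character
`x ↦ χ₀(ux)` separates `S` from `S'`. -/
theorem separation_by_unit_character {R : Type*} [CommRing R] [Fintype R]
    (hCG : IsCGRing R) (L : Subgroup Rˣ)
    (χ₀ : AddChar R ℂ) (hχ₀ : Function.Bijective (fun r : R => χ₀.mulShift r))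
    (T : Set R) (t : R) (hT : T = {y : R | ∃ l ∈ L, ((l : Rˣ) : R) * t = y})
    (hTpure : IsPureSet T)
    (S S' : Set R) (hS : S ⊆ T) (hS' : S' ⊆ T) (hne : S ≠ S') (hSne : S.Nonempty) :
    ∃ u : Rˣ, (∑ᶠ s ∈ S, χ₀ ((u : R) * s)) ≠ ∑ᶠ s ∈ S', χ₀ ((u : R) * s) := by
  classical
  by_contra hcon
  push_neg at hcon
  -- unpack the CG structure
  obtain ⟨n, Fac, instCR, instFT, hGal, hCop, ⟨β⟩⟩ := hCG
  letI := instCR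
  letI := instFT
  -- Galois factor data
  have hfac := fun i => aux_galois (hGal i)
  choose p s hpp hpdvd hs0 hps hkillF using hfac
  -- idempotents and socle generators
  set ε : Fin n → R := fun i => β.symm (Pi.single i 1) with hεdef
  set σ : Fin n → R := fun i => β.symm (Pi.single i (s i)) with hσdef
  have h3i : ∀ i, σ i * ε i = σ i := by
    intro i
    rw [hσdef, hεdef]
    rw [← map_mul, aux_mul_single]
    simp
  have h3j : ∀ i j, i ≠ j → σ i * ε j = 0 := by
    intro i j hij
    rw [hσdef, hεdef]
    rw [← map_mul, aux_single_mul_single hij, map_zero]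
  have hσ0 : ∀ i, σ i ≠ 0 := by
    intro i h0
    have : (Pi.single i (s i) : ∀ j, Fac j) = 0 := by
      have := congrArg β h0
      simpa [hσdef] using this
    have := congrFun this i
    rw [Pi.single_eq_same] at this
    exact hs0 i this
  have hnuk : ∀ (w : R) (i : Fin n), ¬ IsUnit (β w i) → w * σ i = 0 := by
    intro w i hnu
    have : β (w * σ i) = 0 := by
      rw [map_mul, hσdef, RingEquiv.apply_symm_apply, aux_mul_single, hkillF i _ hnu,
        Pi.single_zero]
    have := congrArg β.symm this
    simpa using this
  have hinv : ∀ (i : Fin n) (r : R), r * σ i ≠ 0 → ∃ r', r' * r * σ i = σ i := by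
    intro i r hr
    have hu : IsUnit (β r i) := by
      by_contra hnu
      exact hr (hnuk r i hnu)
    obtain ⟨v, hv⟩ := hu
    refine ⟨β.symm (Function.update (1 : ∀ j, Fac j) i ↑v⁻¹), ?_⟩
    apply β.injective
    rw [map_mul, map_mul, RingEquiv.apply_symm_apply, hσdef, RingEquiv.apply_symm_apply]
    rw [mul_assoc, aux_mul_single, aux_mul_single, Function.update_self]
    congr 1
    rw [← hv, ← mul_assoc, Units.inv_mul, one_mul]
  have hp : ∀ i, ((p i : ℕ) : R) * σ i = 0 := by
    intro i
    apply β.injective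
    rw [map_mul, map_natCast, hσdef, RingEquiv.apply_symm_apply, aux_mul_single,
      Pi.natCast_apply, hps i, Pi.single_zero, map_zero]
  have hpd : ∀ i j, i ≠ j → p i ≠ p j := by
    intro i j hij heq
    have hdj : p i ∣ ringChar (Fac j) := heq ▸ hpdvd j
    have hgcd : p i ∣ Nat.gcd (ringChar (Fac i)) (ringChar (Fac j)) :=
      Nat.dvd_gcd (hpdvd i) hdj
    have hc := hCop i j hij
    rw [Nat.coprime_iff_gcd_eq_one] at hc
    rw [hc] at hgcd
    exact (hpp i).ne_one (Nat.dvd_one.mp hgcd)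
  -- the function F = 1_S - 1_S'
  set F : R → ℂ := fun y => (if y ∈ S then (1:ℂ) else 0) - (if y ∈ S' then 1 else 0) with hFdef
  have hFsupp : ∀ y : R, y ∉ T → F y = 0 := by
    intro y hy
    simp only [hFdef]
    rw [if_neg (fun h => hy (hS h)), if_neg (fun h => hy (hS' h)), sub_zero]
  -- vanishing of unit character sums
  have hindsum : ∀ (X : Set R) (v : Rˣ),
      ∑ y : R, (if y ∈ X then (1:ℂ) else 0) * χ₀ ((v : R) * y) = ∑ᶠ z ∈ X, χ₀ ((v : R) * z) := by
    intro X v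
    have h1 : ∀ y : R, (if y ∈ X then (1:ℂ) else 0) * χ₀ ((v : R) * y)
        = if y ∈ X.toFinset then χ₀ ((v : R) * y) else 0 := by
      intro y
      by_cases h : y ∈ X
      · rw [if_pos h, if_pos (Set.mem_toFinset.mpr h), one_mul]
      · rw [if_neg h, if_neg (fun hh => h (Set.mem_toFinset.mp hh)), zero_mul]
    rw [Finset.sum_congr rfl (fun y _ => h1 y), Finset.sum_ite_mem, Finset.univ_inter]
    rw [← finsum_mem_coe_finset, Set.coe_toFinset]
  have hu : ∀ u : R, IsUnit u → ∑ y : R, F y * χ₀ (u * y) = 0 := by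
    intro u hu'
    obtain ⟨v, rfl⟩ := hu'
    have : ∑ y : R, F y * χ₀ ((v : R) * y)
        = (∑ y : R, (if y ∈ S then (1:ℂ) else 0) * χ₀ ((v : R) * y))
          - ∑ y : R, (if y ∈ S' then (1:ℂ) else 0) * χ₀ ((v : R) * y) := by
      rw [← Finset.sum_sub_distrib]
      apply Finset.sum_congr rfl
      intro y _
      simp only [hFdef]
      ring
    rw [this, hindsum, hindsum, hcon v, sub_self]
  -- nonunits have some nonunit coordinate
  have hnon : ∀ w : R, ¬ IsUnit w → ∃ i, ¬ IsUnit (β w i) := by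
    intro w hw
    by_contra hall
    push_neg at hall
    have : IsUnit (β w) := aux_pi_isUnit hall
    have := this.map β.symm
    rw [RingEquiv.symm_apply_apply] at this
    exact hw this
  -- main pointwise vanishing
  have hF0 : ∀ y : R, F y = 0 := by
    intro y
    by_cases hyT : y ∈ T
    · obtain ⟨a, haV, hablock⟩ := aux_choice ε σ p h3i h3j hσ0 hinv hp hpp hpd L T t hT
        hTpure y hyT
      have haK : ∀ w : R, ¬ IsUnit w → ∃ i, w * (-(a i)) = 0 := by
        intro w hw
        obtain ⟨i, hi⟩ := hnon w hw
        obtain ⟨b, hb⟩ := haV i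
        refine ⟨i, ?_⟩
        rw [hb]
        have : w * σ i = 0 := hnuk w i hi
        calc w * -(b * σ i) = -b * (w * σ i) := by ring
          _ = 0 := by rw [this, mul_zero]
      have hcorner := aux_corner χ₀ hχ₀.1 F hu (fun i => -(a i)) haK y
      rw [Finset.sum_eq_single_of_mem ∅ (Finset.empty_mem_powerset _)] at hcorner
      · simp only [Finset.card_empty, Finset.sum_empty, sub_zero, Nat.sub_zero] at hcorner
        have hne0 : ((-1:ℂ))^n ≠ 0 := pow_ne_zero _ (by norm_num)
        exact (mul_eq_zero.mp hcorner).resolve_left hne0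
      · intro B _ hBne
        have hBne' : B.Nonempty := Finset.nonempty_iff_ne_empty.mpr hBne
        have : y - ∑ i ∈ B, -(a i) = y + ∑ i ∈ B, a i := by
          rw [Finset.sum_neg_distrib, sub_neg_eq_add]
        rw [this, hFsupp _ (hablock B hBne'), mul_zero]
    · exact hFsupp y hyT
  -- conclude S = S'
  apply hne
  ext y
  have hy := hF0 y
  simp only [hFdef] at hy
  by_cases h1 : y ∈ S <;> by_cases h2 : y ∈ S' <;> simp [h1, h2] at hy ⊢
end
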